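/- Let Ω, Υ ⊆ ℝⁿ be open, let L ≥ 1, and let f : Ω → Υ be an L-bilipschitz homeomorphism (L^{−1}|x − y| ≤ |f(x) − f(y)| ≤ L|x − y| for all x, y ∈ Ω). Let p ∈ [1, ∞), 0 ≤ k ≤ n, and let ω be a measurable k-form on Υ. Define the pullback f*ω a.e. on Ω by (f*ω)_x(v_1, …, v_k) = ω_{f(x)}(Df(x)v_1, …, Df(x)v_k), where Df(x) is the a.e.-defined Rademacher derivative of f. Then ∫_Ω |f*ω|^p dx ≤ L^{n+kp} ∫_{f(Ω)} |ω|^p dx. -/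
import Mathlib


open MeasureTheory ENNReal NNReal

noncomputable section
set_option maxHeartbeats 1000000
set_option synthInstance.maxHeartbeats 200000

/-- The standard closed `k`-simplex `Δ_k ⊂ ℝᵏ`. -/
def stdSimplexSet (k : ℕ) : Set (EuclideanSpace ℝ (Fin k)) :=
  {x | (∀ i, 0 ≤ x i) ∧ ∑ i, x i ≤ 1}

/-- A continuous `k`-form on (a subset of) `ℝⁿ`, i.e. a field of continuous alternating
`k`-linear maps `(ℝⁿ)ᵏ → ℝ`. -/
abbrev EucForm (n k : ℕ) := ContinuousAlternatingMap ℝ (EuclideanSpace ℝ (Fin n)) ℝ (Fin k)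

/-- Operator norm of a continuous alternating form. -/
def EucForm.opNorm {n k : ℕ} (ω : EucForm n k) : ℝ := ‖ω.toContinuousMultilinearMap‖

/-- The `k`-dimensional Jacobian `|J_σ|(x) = √(det(Dσ(x)ᵀ Dσ(x)))` of a map
`σ : ℝᵏ → ℝⁿ` at `x`, computed from the Fréchet derivative (defined a.e. for Lipschitz
maps by Rademacher's theorem). -/
def jacobian {k n : ℕ} (σ : EuclideanSpace ℝ (Fin k) → EuclideanSpace ℝ (Fin n))
    (x : EuclideanSpace ℝ (Fin k)) : ℝ :=
  Real.sqrt (LinearMap.det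
    (LinearMap.adjoint ((fderiv ℝ σ x : EuclideanSpace ℝ (Fin k) →ₗ[ℝ] EuclideanSpace ℝ (Fin n)))
      ∘ₗ (fderiv ℝ σ x : EuclideanSpace ℝ (Fin k) →ₗ[ℝ] EuclideanSpace ℝ (Fin n)))) 

/-- The surface measure `ν_σ` of a Lipschitz `k`-simplex `σ`: the pushforward under `σ` of
`|J_σ| · (Lebesgue measure restricted to Δ_k)`, so that
`∫ η dν_σ = ∫_{Δ_k} (η ∘ σ) |J_σ|` for Borel `η ≥ 0`. -/
def surfMeasure {k n : ℕ} (σ : EuclideanSpace ℝ (Fin k) → EuclideanSpace ℝ (Fin n)) :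
    Measure (EuclideanSpace ℝ (Fin n)) :=
  Measure.map σ ((volume.restrict (stdSimplexSet k)).withDensity
    fun x => ENNReal.ofReal (jacobian σ x))

/-- The density of the pullback `σ*ω`: the value `(σ*ω)_x(e₁,…,e_k)`, where `e₁,…,e_k` is
the standard basis of `ℝᵏ`.  The integral `∫_σ ω` is the integral of this function over `Δ_k`. -/
def pullbackDensity {k n : ℕ} (σ : EuclideanSpace ℝ (Fin k) → EuclideanSpace ℝ (Fin n))
    (ω : EuclideanSpace ℝ (Fin n) → EucForm n k) (x : EuclideanSpace ℝ (Fin k)) : ℝ :=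
  ω (σ x) (fun i => fderiv ℝ σ x (EuclideanSpace.single i 1))


/-- The pullback `f*ω` of a measurable `k`-form under a Lipschitz map `f : ℝⁿ → ℝⁿ`,
defined a.e. via the Rademacher derivative: `(f*ω)_x = ω_{f(x)} ∘ (Df(x), …, Df(x))`. -/
def formPullback {n k : ℕ} (f : EuclideanSpace ℝ (Fin n) → EuclideanSpace ℝ (Fin n))
    (ω : EuclideanSpace ℝ (Fin n) → EucForm n k) (x : EuclideanSpace ℝ (Fin n)) :
    EucForm n k :=
  (ω (f x)).compContinuousLinearMap (fderiv ℝ f x)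


/-- An `L`-Lipschitz map on a set `s ⊆ ℝⁿ` increases Lebesgue measure by at most `Lⁿ`. -/
lemma volume_image_le_of_lipschitzOn {n : ℕ} {K : ℝ≥0} (hK : 0 < K)
    {h : EuclideanSpace ℝ (Fin n) → EuclideanSpace ℝ (Fin n)}
    {s : Set (EuclideanSpace ℝ (Fin n))} (hh : LipschitzOnWith K h s) :
    volume (h '' s) ≤ (K : ℝ≥0∞) ^ n * volume s := by
  have hKn0 : ((K : ℝ≥0∞) ^ n) ≠ 0 := by
    simp [pow_eq_zero_iff', hK.ne']
  have hKnt : ((K : ℝ≥0∞) ^ n) ≠ ∞ := ENNReal.pow_ne_top ENNReal.coe_ne_top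
  refine ENNReal.le_of_forall_pos_le_add fun ε hε hfin => ?_
  set δ : ℝ≥0∞ := (ε : ℝ≥0∞) / (K : ℝ≥0∞) ^ n with hδdef
  have hδ : δ ≠ 0 := by
    simp [hδdef, ENNReal.div_eq_zero_iff, hKnt, hε.ne']
  obtain ⟨t, r, t_count, ts, hr, scover, hsum⟩ :=
    Besicovitch.exists_closedBall_covering_tsum_measure_le volume hδ (fun _ => Set.Ioi (0:ℝ)) s
      (fun x _ δ' hδ' => ⟨δ' / 2, half_pos hδ', half_pos hδ', half_lt_self hδ'⟩)
  have himg : h '' s ⊆ ⋃ x ∈ t, Metric.closedBall (h x) (K * r x) := by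
    rintro _ ⟨z, hz, rfl⟩
    obtain ⟨x, hx, hzx⟩ : ∃ x ∈ t, z ∈ Metric.closedBall x (r x) := by
      simpa using scover hz
    refine Set.mem_biUnion hx ?_
    rw [Metric.mem_closedBall] at hzx ⊢
    calc dist (h z) (h x) ≤ K * dist z x := hh.dist_le_mul z hz x (ts hx)
      _ ≤ K * r x := by gcongr
  have hball : ∀ x ∈ t, volume (Metric.closedBall (h x) (K * r x))
      = (K : ℝ≥0∞) ^ n * volume (Metric.closedBall x (r x)) := by
    intro x hx
    have hrx : (0:ℝ) < r x := hr x hx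
    rw [Measure.addHaar_closedBall _ _ (by positivity : (0:ℝ) ≤ (K:ℝ) * r x),
      Measure.addHaar_closedBall _ _ hrx.le, finrank_euclideanSpace_fin, mul_pow,
      ENNReal.ofReal_mul (by positivity), ← mul_assoc, ENNReal.ofReal_pow K.coe_nonneg,
      ENNReal.ofReal_coe_nnreal]
  calc volume (h '' s)
      ≤ ∑' x : t, volume (Metric.closedBall (h x) (K * r x)) :=
        (measure_mono himg).trans (measure_biUnion_le volume t_count _)
    _ = ∑' x : t, (K : ℝ≥0∞) ^ n
          * volume (Metric.closedBall (x : EuclideanSpace ℝ (Fin n)) (r x)) :=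
        tsum_congr fun x => hball x x.2
    _ = (K : ℝ≥0∞) ^ n
          * ∑' x : t, volume (Metric.closedBall (x : EuclideanSpace ℝ (Fin n)) (r x)) :=
        ENNReal.tsum_mul_left
    _ ≤ (K : ℝ≥0∞) ^ n * (volume s + δ) := by gcongr
    _ = (K : ℝ≥0∞) ^ n * volume s + (K : ℝ≥0∞) ^ n * δ := mul_add _ _ _
    _ ≤ (K : ℝ≥0∞) ^ n * volume s + ε := by
        gcongr
        exact ENNReal.mul_div_le

/-- For an `L`-bilipschitz homeomorphism `f : Ω → Υ` between open subsets of `ℝⁿ` and a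
measurable `k`-form `ω` on `Υ`, the pullback satisfies
`∫_Ω |f*ω|^p ≤ L^{n+kp} ∫_{f(Ω)} |ω|^p`. -/
theorem pullback_Lp_estimate {n k : ℕ} (hkn : k ≤ n)
    (Ω Υ : Set (EuclideanSpace ℝ (Fin n))) (hΩ : IsOpen Ω) (hΥ : IsOpen Υ)
    (L : ℝ) (hL : 1 ≤ L)
    (f : EuclideanSpace ℝ (Fin n) → EuclideanSpace ℝ (Fin n))
    (hbilip : ∀ x ∈ Ω, ∀ y ∈ Ω,
      L⁻¹ * dist x y ≤ dist (f x) (f y) ∧ dist (f x) (f y) ≤ L * dist x y)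
    (himage : f '' Ω = Υ)
    (p : ℝ) (hp : 1 ≤ p)
    (ω : EuclideanSpace ℝ (Fin n) → EucForm n k) (hω : StronglyMeasurable ω) :
    ∫⁻ x in Ω, ENNReal.ofReal ((formPullback f ω x).opNorm) ^ p ≤
      ENNReal.ofReal (L ^ ((n : ℝ) + k * p)) *
        ∫⁻ y in f '' Ω, ENNReal.ofReal ((ω y).opNorm) ^ p := by
  have hL0 : (0:ℝ) < L := lt_of_lt_of_le one_pos hL
  have hp0 : (0:ℝ) ≤ p := le_trans zero_le_one hp
  set K : ℝ≥0 := L.toNNReal with hKdef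
  have hKL : (K : ℝ) = L := Real.coe_toNNReal L hL0.le
  have hKpos : 0 < K := by
    rw [← NNReal.coe_lt_coe, hKL]; exact hL0
  -- f is Lipschitz on Ω
  have hlip : LipschitzOnWith K f Ω := by
    apply LipschitzOnWith.of_dist_le_mul
    intro x hx y hy
    rw [hKL]
    exact (hbilip x hx y hy).2
  -- f is injective on Ω
  have hinj : Set.InjOn f Ω := by
    intro x hx y hy hxy
    have h1 := (hbilip x hx y hy).1
    rw [hxy, dist_self] at h1
    have : dist x y ≤ 0 := by
      have hLi : (0:ℝ) < L⁻¹ := by positivity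
      nlinarith [dist_nonneg (x := x) (y := y)]
    exact dist_le_zero.mp this
  -- derivative bound
  have hDf : ∀ x ∈ Ω, ‖fderiv ℝ f x‖ ≤ L := by
    intro x hx
    by_cases hd : DifferentiableAt ℝ f x
    · have h := HasFDerivAt.le_of_lipschitzOn hd.hasFDerivAt (hΩ.mem_nhds hx) hlip
      rwa [hKL] at h
    · rw [fderiv_zero_of_not_differentiableAt hd]
      simpa using hL0.le
  -- pointwise bound
  have hpt : ∀ x ∈ Ω, (formPullback f ω x).opNorm ≤ L ^ k * (ω (f x)).opNorm := by
    intro x hx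
    have h1 : (formPullback f ω x).opNorm
        ≤ (ω (f x)).opNorm * ∏ _i : Fin k, ‖fderiv ℝ f x‖ :=
      ContinuousMultilinearMap.norm_compContinuousLinearMap_le _ _
    refine h1.trans ?_
    rw [Finset.prod_const, Finset.card_univ, Fintype.card_fin]
    have hk : ‖fderiv ℝ f x‖ ^ k ≤ L ^ k :=
      pow_le_pow_left₀ (norm_nonneg _) (hDf x hx) k
    calc (ω (f x)).opNorm * ‖fderiv ℝ f x‖ ^ k
        ≤ (ω (f x)).opNorm * L ^ k := by
          apply mul_le_mul_of_nonneg_left hk (norm_nonneg _)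
      _ = L ^ k * (ω (f x)).opNorm := mul_comm _ _
  -- the measurable integrand on the target
  set g : EuclideanSpace ℝ (Fin n) → ℝ≥0∞ :=
    fun y => ENNReal.ofReal ((ω y).opNorm) ^ p with hgdef
  have hnormMeas : Measurable fun y => (ω y).opNorm := by
    have hc : Continuous fun ψ : EucForm n k => ψ.opNorm :=
      continuous_norm.comp
        ContinuousAlternatingMap.uniformContinuous_toContinuousMultilinearMap.continuous
    exact (hc.comp_stronglyMeasurable hω).measurable
  have hgm : Measurable g :=
    ENNReal.continuous_rpow_const.measurable.comp (ENNReal.measurable_ofReal.comp hnormMeas)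
  -- change of variables
  have hfa : AEMeasurable f (volume.restrict Ω) :=
    hlip.continuousOn.aemeasurable hΩ.measurableSet
  have hmle : Measure.map f (volume.restrict Ω)
      ≤ ((K : ℝ≥0∞) ^ n) • volume.restrict (f '' Ω) := by
    rw [Measure.le_iff]
    intro A hA
    rw [Measure.map_apply_of_aemeasurable hfa hA, Measure.restrict_apply' hΩ.measurableSet,
      Measure.smul_apply, smul_eq_mul,
      Measure.restrict_apply' (himage ▸ hΥ.measurableSet)]
    set B := f ⁻¹' A ∩ Ω with hBdef
    have hBΩ : B ⊆ Ω := Set.inter_subset_right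
    have hBsub : B ⊆ Function.invFunOn f Ω '' (f '' B) := by
      intro x hx
      exact ⟨f x, Set.mem_image_of_mem f hx, hinj.leftInvOn_invFunOn (hBΩ hx)⟩
    have hlipinv : LipschitzOnWith K (Function.invFunOn f Ω) (f '' B) := by
      apply LipschitzOnWith.of_dist_le_mul
      rintro _ ⟨x1, hx1, rfl⟩ _ ⟨x2, hx2, rfl⟩
      rw [hinj.leftInvOn_invFunOn (hBΩ hx1), hinj.leftInvOn_invFunOn (hBΩ hx2), hKL]
      have := (hbilip x1 (hBΩ hx1) x2 (hBΩ hx2)).1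
      rw [inv_mul_le_iff₀ hL0] at this
      exact this
    have hfB : f '' B ⊆ A ∩ f '' Ω := by
      rintro _ ⟨x, hx, rfl⟩
      exact ⟨hx.1, Set.mem_image_of_mem f (hBΩ hx)⟩
    calc volume B ≤ volume (Function.invFunOn f Ω '' (f '' B)) := measure_mono hBsub
      _ ≤ (K : ℝ≥0∞) ^ n * volume (f '' B) := volume_image_le_of_lipschitzOn hKpos hlipinv
      _ ≤ (K : ℝ≥0∞) ^ n * volume (A ∩ f '' Ω) := by
          gcongr
  have key : ∫⁻ x in Ω, g (f x) ≤ (K : ℝ≥0∞) ^ n * ∫⁻ y in f '' Ω, g y := by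
    rw [← lintegral_map' hgm.aemeasurable hfa]
    calc ∫⁻ y, g y ∂(Measure.map f (volume.restrict Ω))
        ≤ ∫⁻ y, g y ∂(((K : ℝ≥0∞) ^ n) • volume.restrict (f '' Ω)) :=
          lintegral_mono' hmle le_rfl
      _ = (K : ℝ≥0∞) ^ n * ∫⁻ y in f '' Ω, g y := lintegral_smul_measure _ _
  -- constants
  set c : ℝ≥0∞ := ENNReal.ofReal L with hcdef
  have hc1 : 1 ≤ c := by
    rw [hcdef, ← ENNReal.ofReal_one]
    exact ENNReal.ofReal_le_ofReal hL
  have hc0 : c ≠ 0 := by intro hh; rw [hh] at hc1; simp at hc1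
  have hct : c ≠ ∞ := ENNReal.ofReal_ne_top
  have hcK : c = (K : ℝ≥0∞) := rfl
  -- step 1: pointwise integral bound
  have step1 : ∫⁻ x in Ω, ENNReal.ofReal ((formPullback f ω x).opNorm) ^ p
      ≤ c ^ ((k : ℝ) * p) * ∫⁻ x in Ω, g (f x) := by
    rw [← lintegral_const_mul' _ _ (by simp [ENNReal.rpow_eq_top_iff, hc0, hct] : c ^ ((k:ℝ)*p) ≠ ∞)]
    apply lintegral_mono_ae
    rw [ae_restrict_iff' hΩ.measurableSet]
    filter_upwards with x hx
    have h2 : ENNReal.ofReal ((formPullback f ω x).opNorm)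
        ≤ ENNReal.ofReal (L ^ k * (ω (f x)).opNorm) :=
      ENNReal.ofReal_le_ofReal (hpt x hx)
    calc ENNReal.ofReal ((formPullback f ω x).opNorm) ^ p
        ≤ ENNReal.ofReal (L ^ k * (ω (f x)).opNorm) ^ p := ENNReal.rpow_le_rpow h2 hp0
      _ = (ENNReal.ofReal (L ^ k) * ENNReal.ofReal ((ω (f x)).opNorm)) ^ p := by
          rw [ENNReal.ofReal_mul (by positivity)]
      _ = ENNReal.ofReal (L ^ k) ^ p * ENNReal.ofReal ((ω (f x)).opNorm) ^ p :=
          ENNReal.mul_rpow_of_nonneg _ _ hp0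
      _ = c ^ ((k : ℝ) * p) * g (f x) := by
          rw [hgdef]
          congr 1
          rw [hcdef, ENNReal.ofReal_pow hL0.le,
            ← ENNReal.rpow_natCast (ENNReal.ofReal L) k, ← ENNReal.rpow_mul]
  have hconst : ENNReal.ofReal (L ^ ((n : ℝ) + k * p)) = c ^ ((k : ℝ) * p) * (K : ℝ≥0∞) ^ n := by
    rw [← hcK, ← ENNReal.ofReal_rpow_of_pos hL0, ENNReal.rpow_add _ _ hc0 hct,
      ENNReal.rpow_natCast, mul_comm]
  calc ∫⁻ x in Ω, ENNReal.ofReal ((formPullback f ω x).opNorm) ^ p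
      ≤ c ^ ((k : ℝ) * p) * ∫⁻ x in Ω, g (f x) := step1
    _ ≤ c ^ ((k : ℝ) * p) * ((K : ℝ≥0∞) ^ n * ∫⁻ y in f '' Ω, g y) := by gcongr
    _ = ENNReal.ofReal (L ^ ((n : ℝ) + k * p)) * ∫⁻ y in f '' Ω, g y := by
        rw [hconst, mul_assoc]


end
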